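/- Let G be a finite simple graph with vertex set V = {1,…,n}, edge set E, and stability number α(G), and let r ≥ 1. Then the minimum, over all Nullstellensatz certificates 1 = A·(−(α(G)+r) + Σ_{i=1}^n x_i) + Σ_{i∈V} Q_i·(x_i² − x_i) + Σ_{{i,j}∈E} Q_{ij}·x_i·x_j for the non-existence of a stable set of size α(G)+r, of the certificate degree max{deg A, deg Q_i, deg Q_{ij}} equals exactly α(G): a certificate of degree α(G) exists, and no certificate of degree less than α(G) exists. -/

import Mathlib

open Finset MvPolynomial

/-- The edge set of `G`, as ordered pairs `(i, j)` with `i < j`. -/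
def edgePairs {n : ℕ} (G : SimpleGraph (Fin n)) [DecidableRel G.Adj] :
    Finset (Fin n × Fin n) :=
  Finset.univ.filter fun p => p.1 < p.2 ∧ G.Adj p.1 p.2

/-- A finset of vertices is stable (independent) if no two of its members are adjacent. -/
def IsStableSet {n : ℕ} (G : SimpleGraph (Fin n)) (S : Finset (Fin n)) : Prop :=
  ∀ i ∈ S, ∀ j ∈ S, ¬ G.Adj i j

/-- The stability number `α(G)`: the maximum size of a stable set of `G`. -/
def stabilityNumber {n : ℕ} (G : SimpleGraph (Fin n)) [DecidableRel G.Adj] : ℕ :=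
  (Finset.univ.powerset.filter fun S => ∀ i ∈ S, ∀ j ∈ S, ¬ G.Adj i j).sup Finset.card

/-- The Nullstellensatz certificate identity
`1 = A(−(α(G)+r) + Σ x_i) + Σ_i Q_i (x_i² − x_i) + Σ_{{i,j}∈E} Q_{ij} x_i x_j`
for the non-existence of a stable set of size `α(G) + r`. -/
def IsStableCert {n : ℕ} (G : SimpleGraph (Fin n)) [DecidableRel G.Adj] (r : ℕ)
    (A : MvPolynomial (Fin n) ℂ) (Q : Fin n → MvPolynomial (Fin n) ℂ)
    (Qe : Fin n × Fin n → MvPolynomial (Fin n) ℂ) : Prop :=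
  (1 : MvPolynomial (Fin n) ℂ) =
    A * ((∑ i : Fin n, X i) - C ((stabilityNumber G + r : ℕ) : ℂ)) +
    (∑ i : Fin n, Q i * (X i ^ 2 - X i)) +
    ∑ p ∈ edgePairs G, Qe p * (X p.1 * X p.2)

/-- The degree of a certificate: `max{deg A, deg Q_i, deg Q_{ij}}` (total degrees). -/
def stableCertDeg {n : ℕ} (G : SimpleGraph (Fin n)) [DecidableRel G.Adj]
    (A : MvPolynomial (Fin n) ℂ) (Q : Fin n → MvPolynomial (Fin n) ℂ)
    (Qe : Fin n × Fin n → MvPolynomial (Fin n) ℂ) : ℕ :=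
  max A.totalDegree
    (max (Finset.univ.sup fun i => (Q i).totalDegree)
      ((edgePairs G).sup fun p => (Qe p).totalDegree))

/-- A certificate is reduced when every monomial of `A` is square-free and its support
is a stable set of `G`. -/
def IsReducedCoeff {n : ℕ} (G : SimpleGraph (Fin n)) (A : MvPolynomial (Fin n) ℂ) : Prop :=
  ∀ m ∈ A.support, (∀ i : Fin n, m i ≤ 1) ∧ IsStableSet G m.support

/-- The square-free exponent vector `∏_{v ∈ S} x_v` associated with a finset `S`. -/
noncomputable def expOf {n : ℕ} (S : Finset (Fin n)) : Fin n →₀ ℕ :=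
  ∑ v ∈ S, Finsupp.single v 1

section Aux
variable {n : ℕ}

lemma expOf_apply (S : Finset (Fin n)) (i : Fin n) :
    expOf S i = if i ∈ S then 1 else 0 := by
  classical
  rw [expOf, Finsupp.finset_sum_apply]
  by_cases h : i ∈ S
  · rw [Finset.sum_eq_single i (fun b _ hb => by simp [Finsupp.single_apply, hb])
      (fun h' => absurd h h')]
    simp [h]
  · rw [Finset.sum_eq_zero (fun b hb => by
      have : b ≠ i := fun e => h (e ▸ hb)
      simp [Finsupp.single_apply, this])]
    simp [h]

lemma expOf_sum (S : Finset (Fin n)) : ((expOf S).sum fun _ e => e) = S.card := by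
  classical
  rw [expOf]
  induction S using Finset.induction_on with
  | empty => simp
  | @insert a s ha ih =>
      rw [Finset.sum_insert ha, Finsupp.sum_add_index (by simp) (by intros; rfl)]
      simp [Finsupp.sum_single_index, ih, Finset.card_insert_of_notMem ha]
      omega

lemma expOf_support (S : Finset (Fin n)) : (expOf S).support = S := by
  classical
  ext i
  simp [Finsupp.mem_support_iff, expOf_apply]

lemma expOf_injective : Function.Injective (expOf (n := n)) := by
  intro S T h
  rw [← expOf_support S, ← expOf_support T, h]

lemma prod_X_eq (S : Finset (Fin n)) :
    (∏ v ∈ S, (X v : MvPolynomial (Fin n) ℂ)) = monomial (expOf S) 1 := by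
  classical
  induction S using Finset.induction_on with
  | empty => simp [expOf]
  | @insert a s ha ih =>
      rw [Finset.prod_insert ha, ih, X, monomial_mul]
      rw [show expOf (insert a s) = Finsupp.single a 1 + expOf s by
        rw [expOf, expOf, Finset.sum_insert ha]]
      simp

end Aux



section Aux2
variable {n : ℕ}

lemma diff_sum (M : Finset (Fin n)) : ∀ c : ℂ, (∀ k : ℕ, k ≤ M.card → (k : ℂ) ≠ c) →
    ∑ T ∈ M.powerset, (-1 : ℂ) ^ T.card * ((T.card : ℂ) - c)⁻¹
      = (Nat.factorial M.card : ℂ) / ∏ k ∈ Finset.range (M.card + 1), ((k : ℂ) - c) := by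
  classical
  induction M using Finset.induction_on with
  | empty =>
      intro c hc
      simp
  | @insert a M ha ih =>
      intro c hc
      have hcard : (insert a M).card = M.card + 1 := Finset.card_insert_of_notMem ha
      have hM : ∀ k : ℕ, k ≤ M.card → (k : ℂ) ≠ c := fun k hk => hc k (by omega)
      have hM' : ∀ k : ℕ, k ≤ M.card → (k : ℂ) ≠ c - 1 := by
        intro k hk h
        have h2 : ((k + 1 : ℕ) : ℂ) = c := by push_cast; rw [h]; ring
        exact hc (k + 1) (by omega) h2
      rw [Finset.sum_powerset_insert ha]
      have h2 : ∑ T ∈ M.powerset, (-1 : ℂ) ^ (insert a T).card * (((insert a T).card : ℂ) - c)⁻¹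
          = -∑ T ∈ M.powerset, (-1 : ℂ) ^ T.card * ((T.card : ℂ) - (c - 1))⁻¹ := by
        rw [← Finset.sum_neg_distrib]
        refine Finset.sum_congr rfl fun T hT => ?_
        have haT : a ∉ T := fun h => ha (Finset.mem_powerset.mp hT h)
        rw [Finset.card_insert_of_notMem haT]
        rw [pow_succ]
        push_cast
        rw [show (T.card : ℂ) + 1 - c = (T.card : ℂ) - (c - 1) by ring]
        ring
      rw [h2, ih c hM, ih (c - 1) hM']
      -- algebra
      set m := M.card with hm
      have hne : ∀ k : ℕ, k ≤ m + 1 → ((k : ℂ) - c) ≠ 0 := by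
        intro k hk
        exact sub_ne_zero.mpr (hc k (by omega))
      have hP0 : (∏ k ∈ Finset.range (m + 1), ((k : ℂ) - c)) ≠ 0 := by
        rw [Finset.prod_ne_zero_iff]
        intro k hk; exact hne k (by simp at hk; omega)
      have hshift : (∏ k ∈ Finset.range (m + 1), ((k : ℂ) - (c - 1)))
          = ∏ k ∈ Finset.range (m + 1), (((k + 1 : ℕ) : ℂ) - c) := by
        refine Finset.prod_congr rfl fun k _ => ?_
        push_cast; ring
      have hP1 : (∏ k ∈ Finset.range (m + 1), ((k : ℂ) - (c - 1))) ≠ 0 := by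
        rw [hshift, Finset.prod_ne_zero_iff]
        intro k hk; exact hne (k + 1) (by simp at hk; omega)
      have hP2a : (∏ k ∈ Finset.range (m + 2), ((k : ℂ) - c))
          = (∏ k ∈ Finset.range (m + 1), ((k : ℂ) - c)) * (((m + 1 : ℕ) : ℂ) - c) := by
        rw [Finset.prod_range_succ]
      have hP2b : (∏ k ∈ Finset.range (m + 2), ((k : ℂ) - c))
          = (∏ k ∈ Finset.range (m + 1), ((k : ℂ) - (c - 1))) * ((0 : ℂ) - c) := by
        rw [Finset.prod_range_succ' (fun k => ((k : ℂ) - c)) (m + 1), ← hshift]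
        norm_num
      have hP2 : (∏ k ∈ Finset.range (m + 2), ((k : ℂ) - c)) ≠ 0 := by
        rw [Finset.prod_ne_zero_iff]
        intro k hk; exact hne k (by simp at hk; omega)
      rw [hcard]
      rw [eq_div_iff hP2, add_mul, neg_mul]
      have e1 : (Nat.factorial m : ℂ) / (∏ k ∈ Finset.range (m + 1), ((k : ℂ) - c))
            * (∏ k ∈ Finset.range (m + 2), ((k : ℂ) - c))
          = (Nat.factorial m : ℂ) * (((m + 1 : ℕ) : ℂ) - c) := by
        rw [hP2a]; field_simp
      have e2 : (Nat.factorial m : ℂ) / (∏ k ∈ Finset.range (m + 1), ((k : ℂ) - (c - 1)))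
            * (∏ k ∈ Finset.range (m + 2), ((k : ℂ) - c))
          = (Nat.factorial m : ℂ) * ((0 : ℂ) - c) := by
        rw [hP2b]; field_simp
      rw [e1, e2]
      push_cast [Nat.factorial_succ]
      ring

lemma indicator_sum_zero (M F : Finset (Fin n)) (v : Fin n) (hv : v ∈ M) (hvF : v ∉ F) :
    ∑ T ∈ M.powerset, (-1 : ℂ) ^ T.card * (if F ⊆ T then 1 else 0) = 0 := by
  classical
  refine Finset.sum_involution
    (fun T _ => if v ∈ T then T.erase v else insert v T) ?_ ?_ ?_ ?_
  · intro T hT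
    by_cases hvT : v ∈ T
    · simp only [hvT, if_true]
      have hiff : F ⊆ T.erase v ↔ F ⊆ T := by
        rw [Finset.subset_erase]; exact ⟨fun h => h.1, fun h => ⟨h, hvF⟩⟩
      rw [if_congr hiff rfl rfl]
      have hc : (-1 : ℂ) ^ T.card = -(-1 : ℂ) ^ (T.erase v).card := by
        rw [← Finset.card_erase_add_one hvT, pow_succ]; ring
      rw [hc]; ring
    · simp only [hvT, if_false]
      rw [if_congr (Finset.subset_insert_iff_of_notMem hvF) rfl rfl,
        Finset.card_insert_of_notMem hvT, pow_succ]
      ring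
  · intro T hT _
    by_cases hvT : v ∈ T
    · simp only [hvT, if_true]
      intro h
      exact Finset.notMem_erase v T (by rw [h]; exact hvT)
    · simp only [hvT, if_false]
      intro h
      exact hvT (by rw [← h]; exact Finset.mem_insert_self v T)
  · intro T hT
    by_cases hvT : v ∈ T
    · simp only [hvT, if_true, Finset.mem_powerset]
      exact (Finset.erase_subset v T).trans (Finset.mem_powerset.mp hT)
    · simp only [hvT, if_false, Finset.mem_powerset]
      exact Finset.insert_subset hv (Finset.mem_powerset.mp hT)
  · intro T hT
    by_cases hvT : v ∈ T
    · simp [hvT, Finset.notMem_erase, Finset.insert_erase]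
    · simp [hvT, Finset.mem_insert_self, Finset.erase_insert]

end Aux2

section LB
variable {n : ℕ} (G : SimpleGraph (Fin n)) [DecidableRel G.Adj]

/-- characteristic point of a vertex subset -/
noncomputable def chi (T : Finset (Fin n)) : Fin n → ℂ := fun i => if i ∈ T then 1 else 0

/-- the stable sets of `G`, as a finset -/
def Stb : Finset (Finset (Fin n)) :=
  Finset.univ.powerset.filter fun S => ∀ i ∈ S, ∀ j ∈ S, ¬ G.Adj i j

lemma stab_eq_sup : stabilityNumber G = (Stb G).sup Finset.card := rfl

lemma mem_Stb {S : Finset (Fin n)} : S ∈ Stb G ↔ ∀ i ∈ S, ∀ j ∈ S, ¬ G.Adj i j := by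
  simp [Stb]

lemma Stb_mono {S T : Finset (Fin n)} (hTS : T ⊆ S) (hS : S ∈ Stb G) : T ∈ Stb G := by
  rw [mem_Stb] at hS ⊢
  exact fun i hi j hj => hS i (hTS hi) j (hTS hj)

lemma empty_mem_Stb : (∅ : Finset (Fin n)) ∈ Stb G := by simp [mem_Stb]

lemma card_le_stab {S : Finset (Fin n)} (hS : S ∈ Stb G) : S.card ≤ stabilityNumber G :=
  Finset.le_sup hS

lemma exists_max_stable : ∃ M ∈ Stb G, M.card = stabilityNumber G := by
  obtain ⟨M, hM, h⟩ := Finset.exists_mem_eq_sup (Stb G) ⟨∅, empty_mem_Stb G⟩ Finset.card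
  exact ⟨M, hM, (stab_eq_sup G ▸ h).symm⟩

lemma eval_chi_sum (T : Finset (Fin n)) :
    eval (chi T) (∑ i : Fin n, X i) = (T.card : ℂ) := by
  rw [map_sum]
  simp only [eval_X, chi]
  rw [Finset.sum_boole]
  congr 1
  simp [Finset.filter_mem_eq_inter]

lemma eval_chi_cert {r : ℕ} {A : MvPolynomial (Fin n) ℂ} {Q : Fin n → MvPolynomial (Fin n) ℂ}
    {Qe : Fin n × Fin n → MvPolynomial (Fin n) ℂ} (hc : IsStableCert G r A Q Qe)
    {T : Finset (Fin n)} (hT : T ∈ Stb G) :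
    eval (chi T) A * ((T.card : ℂ) - ((stabilityNumber G + r : ℕ) : ℂ)) = 1 := by
  have h := congrArg (eval (chi T)) hc
  rw [map_one, map_add, map_add, map_mul, map_sub, eval_chi_sum, eval_C] at h
  rw [map_sum, map_sum] at h
  rw [Finset.sum_eq_zero (fun i _ => by
    rw [map_mul, map_sub, map_pow, eval_X]
    have : chi T i ^ 2 - chi T i = 0 := by
      unfold chi; split_ifs <;> norm_num
    rw [this, mul_zero])] at h
  rw [Finset.sum_eq_zero (fun p hp => by
    rw [map_mul, map_mul, eval_X, eval_X]
    have hadj : G.Adj p.1 p.2 := ((Finset.mem_filter.mp hp).2).2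
    have : chi T p.1 * chi T p.2 = 0 := by
      unfold chi
      by_cases h1 : p.1 ∈ T
      · by_cases h2 : p.2 ∈ T
        · exact absurd hadj ((mem_Stb G).mp hT p.1 h1 p.2 h2)
        · simp [h2]
      · simp [h1]
    rw [this, mul_zero])] at h
  rw [add_zero, add_zero] at h
  exact h.symm

lemma stab_lt_cast {k : ℕ} (hk : k ≤ stabilityNumber G) (r : ℕ) (hr : 1 ≤ r) :
    (k : ℂ) ≠ ((stabilityNumber G + r : ℕ) : ℂ) := by
  intro h
  have := Nat.cast_injective (R := ℂ) h
  omega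

lemma lower_bound {r : ℕ} (hr : 1 ≤ r) {A : MvPolynomial (Fin n) ℂ}
    {Q : Fin n → MvPolynomial (Fin n) ℂ} {Qe : Fin n × Fin n → MvPolynomial (Fin n) ℂ}
    (hc : IsStableCert G r A Q Qe) : stabilityNumber G ≤ A.totalDegree := by
  classical
  by_contra hlt
  push_neg at hlt
  obtain ⟨M, hM, hMcard⟩ := exists_max_stable G
  set β : ℂ := ((stabilityNumber G + r : ℕ) : ℂ) with hβ
  -- the alternating sum of evaluations
  have key1 : ∑ T ∈ M.powerset, (-1 : ℂ) ^ T.card * eval (chi T) A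
      = ∑ T ∈ M.powerset, (-1 : ℂ) ^ T.card * ((T.card : ℂ) - β)⁻¹ := by
    refine Finset.sum_congr rfl fun T hT => ?_
    have hTstb : T ∈ Stb G := Stb_mono G (Finset.mem_powerset.mp hT) hM
    have hTcard : T.card ≤ stabilityNumber G := card_le_stab G hTstb
    have hne : ((T.card : ℂ) - β) ≠ 0 := sub_ne_zero.mpr (stab_lt_cast G hTcard r hr)
    have := eval_chi_cert G hc hTstb
    congr 1
    field_simp
    linear_combination this
  have key2 : ∑ T ∈ M.powerset, (-1 : ℂ) ^ T.card * ((T.card : ℂ) - β)⁻¹ ≠ 0 := by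
    rw [diff_sum M β (fun k hk => stab_lt_cast G (hMcard ▸ hk) r hr)]
    apply div_ne_zero
    · exact_mod_cast Nat.cast_ne_zero.mpr (Nat.factorial_ne_zero M.card)
    · rw [Finset.prod_ne_zero_iff]
      intro k hk
      refine sub_ne_zero.mpr (stab_lt_cast G ?_ r hr)
      rw [Finset.mem_range] at hk
      omega
  -- but by the degree bound it is zero
  have key3 : ∑ T ∈ M.powerset, (-1 : ℂ) ^ T.card * eval (chi T) A = 0 := by
    have expand : ∀ T : Finset (Fin n), eval (chi T) A
        = ∑ d ∈ A.support, coeff d A * (if d.support ⊆ T then 1 else 0) := by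
      intro T
      rw [eval_eq]
      refine Finset.sum_congr rfl fun d hd => ?_
      congr 1
      by_cases hsub : d.support ⊆ T
      · rw [if_pos hsub]
        refine Finset.prod_eq_one fun i hi => ?_
        have : chi T i = 1 := by unfold chi; rw [if_pos (hsub hi)]
        rw [this, one_pow]
      · rw [if_neg hsub]
        obtain ⟨i, hi, hiT⟩ := Finset.not_subset.mp hsub
        refine Finset.prod_eq_zero hi ?_
        have h0 : chi T i = 0 := by unfold chi; rw [if_neg hiT]
        rw [h0, zero_pow (Finsupp.mem_support_iff.mp hi)]
    calc ∑ T ∈ M.powerset, (-1 : ℂ) ^ T.card * eval (chi T) A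
        = ∑ T ∈ M.powerset, ∑ d ∈ A.support,
            coeff d A * ((-1 : ℂ) ^ T.card * (if d.support ⊆ T then 1 else 0)) := by
          refine Finset.sum_congr rfl fun T _ => ?_
          rw [expand T, Finset.mul_sum]
          exact Finset.sum_congr rfl fun d _ => by ring
      _ = ∑ d ∈ A.support, coeff d A *
            (∑ T ∈ M.powerset, (-1 : ℂ) ^ T.card * (if d.support ⊆ T then 1 else 0)) := by
          rw [Finset.sum_comm]
          exact Finset.sum_congr rfl fun d _ => by rw [Finset.mul_sum]
      _ = 0 := by
          refine Finset.sum_eq_zero fun d hd => ?_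
          have hnotsub : ¬ M ⊆ d.support := by
            intro hsub
            have h1 : M.card ≤ d.support.card := Finset.card_le_card hsub
            have h2 : d.support.card ≤ d.sum fun _ e => e := by
              rw [Finsupp.sum]
              calc d.support.card = ∑ _i ∈ d.support, 1 := by
                    rw [Finset.sum_const, smul_eq_mul, mul_one]
                _ ≤ ∑ i ∈ d.support, d i := Finset.sum_le_sum fun i hi =>
                    Nat.one_le_iff_ne_zero.mpr (Finsupp.mem_support_iff.mp hi)
            have h3 : (d.sum fun _ e => e) ≤ A.totalDegree := le_totalDegree hd
            omega
          obtain ⟨v, hvM, hvd⟩ := Finset.not_subset.mp hnotsub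
          rw [indicator_sum_zero M d.support v hvM hvd, mul_zero]
  rw [key1] at key3
  exact key2 key3
end LB

section Constr
variable {n : ℕ} (G : SimpleGraph (Fin n)) [DecidableRel G.Adj]

noncomputable def cc (β : ℂ) : ℕ → ℂ
  | 0 => (0 - β)⁻¹
  | (k + 1) => (-((k : ℂ) + 1) * cc β k) / (((k : ℂ) + 1) - β)

lemma cc_zero (β : ℂ) (hβ : β ≠ 0) : ((0 : ℂ) - β) * cc β 0 = 1 := by
  rw [cc]
  rw [mul_inv_cancel₀ (by simpa using hβ)]

lemma cc_rec (β : ℂ) (k : ℕ) (hk : 1 ≤ k) (h : (k : ℂ) ≠ β) :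
    ((k : ℂ) - β) * cc β k + (k : ℂ) * cc β (k - 1) = 0 := by
  obtain ⟨m, rfl⟩ : ∃ m, k = m + 1 := ⟨k - 1, by omega⟩
  have hcast : ((m + 1 : ℕ) : ℂ) = (m : ℂ) + 1 := by push_cast; ring
  have hne : ((m : ℂ) + 1) - β ≠ 0 := sub_ne_zero.mpr (by rw [← hcast]; exact h)
  rw [show m + 1 - 1 = m from rfl, cc, hcast, mul_comm, div_mul_cancel₀ _ hne]
  ring

lemma cc_ne (β : ℂ) (k : ℕ) (h : ∀ j : ℕ, j ≤ k → (j : ℂ) ≠ β) : cc β k ≠ 0 := by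
  induction k with
  | zero =>
      rw [cc]
      exact inv_ne_zero (sub_ne_zero.mpr (by exact_mod_cast h 0 le_rfl))
  | succ m ih =>
      rw [cc]
      apply div_ne_zero
      · apply mul_ne_zero
        · intro hz
          have : ((m : ℂ) + 1) = 0 := by linear_combination -hz
          exact Nat.cast_add_one_ne_zero m this
        · exact ih fun j hj => h j (by omega)
      · refine sub_ne_zero.mpr ?_
        have := h (m + 1) le_rfl
        push_cast at this
        exact this

/-- the constant `α(G) + r` as a complex number -/
noncomputable def bet (r : ℕ) : ℂ := ((stabilityNumber G + r : ℕ) : ℂ)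

lemma bet_ne_zero (r : ℕ) (hr : 1 ≤ r) : bet G r ≠ 0 := by
  rw [bet]
  have : stabilityNumber G + r ≠ 0 := by omega
  exact_mod_cast this

lemma bet_ne (r : ℕ) (hr : 1 ≤ r) {k : ℕ} (hk : k ≤ stabilityNumber G) :
    (k : ℂ) ≠ bet G r := by
  rw [bet]
  intro h
  have := Nat.cast_injective (R := ℂ) h
  omega

noncomputable def certA (r : ℕ) : MvPolynomial (Fin n) ℂ :=
  ∑ S ∈ Stb G, C (cc (bet G r) S.card) * ∏ v ∈ S, X v

noncomputable def certQ (r : ℕ) (i : Fin n) : MvPolynomial (Fin n) ℂ :=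
  - ∑ S ∈ (Stb G).filter (fun S => i ∈ S),
      C (cc (bet G r) S.card) * ∏ v ∈ S.erase i, X v

def badPairs : Finset (Finset (Fin n) × Fin n) :=
  ((Stb G) ×ˢ (Finset.univ : Finset (Fin n))).filter
    fun p => p.2 ∉ p.1 ∧ insert p.2 p.1 ∉ Stb G

noncomputable def pick (p : Finset (Fin n) × Fin n) : Fin n :=
  if h : ∃ j ∈ p.1, G.Adj p.2 j then h.choose else p.2

lemma pick_spec {p : Finset (Fin n) × Fin n} (hp : p ∈ badPairs G) :
    pick G p ∈ p.1 ∧ G.Adj p.2 (pick G p) := by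
  have hm := Finset.mem_filter.mp hp
  have hS : p.1 ∈ Stb G := (Finset.mem_product.mp hm.1).1
  have hni : p.2 ∉ p.1 := hm.2.1
  have hnins : insert p.2 p.1 ∉ Stb G := hm.2.2
  have hex : ∃ j ∈ p.1, G.Adj p.2 j := by
    by_contra hno
    push_neg at hno
    apply hnins
    rw [mem_Stb]
    intro i hi j hj hadj
    rcases Finset.mem_insert.mp hi with rfl | hi'
    · rcases Finset.mem_insert.mp hj with rfl | hj'
      · exact G.irrefl hadj
      · exact hno j hj' hadj
    · rcases Finset.mem_insert.mp hj with rfl | hj'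
      · exact hno i hi' hadj.symm
      · exact (mem_Stb G).mp hS i hi' j hj' hadj
  rw [pick, dif_pos hex]
  exact ⟨hex.choose_spec.1, hex.choose_spec.2⟩

noncomputable def epair (p : Finset (Fin n) × Fin n) : Fin n × Fin n :=
  if p.2 < pick G p then (p.2, pick G p) else (pick G p, p.2)

lemma epair_mem {p : Finset (Fin n) × Fin n} (hp : p ∈ badPairs G) :
    epair G p ∈ edgePairs G := by
  obtain ⟨hmem, hadj⟩ := pick_spec G hp
  have hne : p.2 ≠ pick G p := G.ne_of_adj hadj
  rw [epair]
  split_ifs with h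
  · exact Finset.mem_filter.mpr ⟨Finset.mem_univ _, h, hadj⟩
  · have hlt : pick G p < p.2 := lt_of_le_of_ne (not_lt.mp h) (Ne.symm hne)
    exact Finset.mem_filter.mpr ⟨Finset.mem_univ _, hlt, hadj.symm⟩

noncomputable def certQe (r : ℕ) (q : Fin n × Fin n) : MvPolynomial (Fin n) ℂ :=
  - ∑ p ∈ (badPairs G).filter (fun p => epair G p = q),
      C (cc (bet G r) p.1.card) * ∏ v ∈ p.1.erase (pick G p), X v

/-- converting a double sum over a condition into a sum over a filtered product -/
lemma prodfilter (cond : Finset (Fin n) × Fin n → Prop) [DecidablePred cond]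
    (f : Finset (Fin n) → Fin n → MvPolynomial (Fin n) ℂ) :
    ∑ S ∈ Stb G, ∑ i ∈ Finset.univ.filter (fun i => cond (S, i)), f S i
      = ∑ p ∈ ((Stb G) ×ˢ (Finset.univ : Finset (Fin n))).filter cond, f p.1 p.2 := by
  rw [Finset.sum_filter, Finset.sum_product]
  refine Finset.sum_congr rfl fun S _ => ?_
  rw [Finset.sum_filter]

end Constr

section Main
variable {n : ℕ} (G : SimpleGraph (Fin n)) [DecidableRel G.Adj]

lemma filter_mem_univ_eq (S : Finset (Fin n)) :
    Finset.univ.filter (fun i => i ∈ S) = S := by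
  ext i; simp

lemma hQ_lemma (r : ℕ) : (∑ i : Fin n, certQ G r i * (X i ^ 2 - X i))
    = - ∑ S ∈ Stb G, ∑ i ∈ S,
        C (cc (bet G r) S.card) * ((∏ v ∈ S.erase i, X v) * (X i ^ 2 - X i)) := by
  classical
  calc ∑ i : Fin n, certQ G r i * (X i ^ 2 - X i)
      = ∑ i : Fin n, - ∑ S ∈ Stb G, (if i ∈ S then
          C (cc (bet G r) S.card) * ((∏ v ∈ S.erase i, X v) * (X i ^ 2 - X i)) else 0) := by
        refine Finset.sum_congr rfl fun i _ => ?_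
        rw [certQ, neg_mul, Finset.sum_mul, Finset.sum_filter]
        congr 1
        refine Finset.sum_congr rfl fun S _ => ?_
        split_ifs with h
        · ring
        · rfl
    _ = - ∑ i : Fin n, ∑ S ∈ Stb G, (if i ∈ S then
          C (cc (bet G r) S.card) * ((∏ v ∈ S.erase i, X v) * (X i ^ 2 - X i)) else 0) :=
        Finset.sum_neg_distrib _
    _ = - ∑ S ∈ Stb G, ∑ i : Fin n, (if i ∈ S then
          C (cc (bet G r) S.card) * ((∏ v ∈ S.erase i, X v) * (X i ^ 2 - X i)) else 0) := by
        rw [Finset.sum_comm]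
    _ = - ∑ S ∈ Stb G, ∑ i ∈ S,
          C (cc (bet G r) S.card) * ((∏ v ∈ S.erase i, X v) * (X i ^ 2 - X i)) := by
        congr 1
        refine Finset.sum_congr rfl fun S _ => ?_
        rw [Finset.sum_ite_mem, Finset.univ_inter]

lemma hQe_lemma (r : ℕ) : (∑ q ∈ edgePairs G, certQe G r q * (X q.1 * X q.2))
    = - ∑ p ∈ badPairs G, C (cc (bet G r) p.1.card) * ((∏ v ∈ p.1, X v) * X p.2) := by
  classical
  calc ∑ q ∈ edgePairs G, certQe G r q * (X q.1 * X q.2)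
      = ∑ q ∈ edgePairs G, - ∑ p ∈ (badPairs G).filter (fun p => epair G p = q),
          C (cc (bet G r) p.1.card) * ((∏ v ∈ p.1, X v) * X p.2) := by
        refine Finset.sum_congr rfl fun q hq => ?_
        rw [certQe, neg_mul, Finset.sum_mul]
        congr 1
        refine Finset.sum_congr rfl fun p hp => ?_
        obtain ⟨hpbad, hpq⟩ := Finset.mem_filter.mp hp
        obtain ⟨hpick, hadj⟩ := pick_spec G hpbad
        have hxq : (X q.1 : MvPolynomial (Fin n) ℂ) * X q.2 = X p.2 * X (pick G p) := by
          rw [← hpq, epair]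
          split_ifs <;> simp [mul_comm]
        have hprod : (∏ v ∈ p.1.erase (pick G p), (X v : MvPolynomial (Fin n) ℂ))
              * (X p.2 * X (pick G p)) = (∏ v ∈ p.1, X v) * X p.2 := by
          rw [← Finset.mul_prod_erase p.1 _ hpick]
          ring
        rw [mul_assoc, hxq, hprod]
    _ = - ∑ q ∈ edgePairs G, ∑ p ∈ (badPairs G).filter (fun p => epair G p = q),
          C (cc (bet G r) p.1.card) * ((∏ v ∈ p.1, X v) * X p.2) := Finset.sum_neg_distrib _
    _ = - ∑ p ∈ badPairs G, C (cc (bet G r) p.1.card) * ((∏ v ∈ p.1, X v) * X p.2) := by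
        rw [Finset.sum_fiberwise_of_maps_to (fun p hp => epair_mem G hp)]

lemma hAL_lemma (r : ℕ) : certA G r * (∑ i : Fin n, X i)
    = ((∑ S ∈ Stb G, ∑ i ∈ S, C (cc (bet G r) S.card) * (∏ v ∈ S, X v)
        + ∑ S ∈ Stb G, ∑ i ∈ S,
            C (cc (bet G r) S.card) * ((∏ v ∈ S.erase i, X v) * (X i ^ 2 - X i)))
        + ∑ S ∈ Stb G, ∑ i ∈ Finset.univ.filter (fun i => i ∉ S ∧ insert i S ∈ Stb G),
            C (cc (bet G r) S.card) * (∏ v ∈ insert i S, X v))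
        + ∑ S ∈ Stb G, ∑ i ∈ Finset.univ.filter (fun i => i ∉ S ∧ insert i S ∉ Stb G),
            C (cc (bet G r) S.card) * ((∏ v ∈ S, X v) * X i) := by
  classical
  calc certA G r * (∑ i : Fin n, X i)
      = ∑ S ∈ Stb G, ∑ i : Fin n, C (cc (bet G r) S.card) * ((∏ v ∈ S, X v) * X i) := by
        rw [certA, Finset.sum_mul]
        refine Finset.sum_congr rfl fun S _ => ?_
        rw [Finset.mul_sum]
        exact Finset.sum_congr rfl fun i _ => by ring
    _ = ∑ S ∈ Stb G,
          ((∑ i ∈ S, (C (cc (bet G r) S.card) * (∏ v ∈ S, X v)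
              + C (cc (bet G r) S.card) * ((∏ v ∈ S.erase i, X v) * (X i ^ 2 - X i)))
            + ∑ i ∈ Finset.univ.filter (fun i => i ∉ S ∧ insert i S ∈ Stb G),
                C (cc (bet G r) S.card) * (∏ v ∈ insert i S, X v))
            + ∑ i ∈ Finset.univ.filter (fun i => i ∉ S ∧ insert i S ∉ Stb G),
                C (cc (bet G r) S.card) * ((∏ v ∈ S, X v) * X i)) := by
        refine Finset.sum_congr rfl fun S hS => ?_
        rw [← Finset.sum_filter_add_sum_filter_not Finset.univ (fun i => i ∈ S)
              (fun i => C (cc (bet G r) S.card) * ((∏ v ∈ S, X v) * X i))]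
        rw [← Finset.sum_filter_add_sum_filter_not
              (Finset.univ.filter (fun i => ¬ i ∈ S)) (fun i => insert i S ∈ Stb G)
              (fun i => C (cc (bet G r) S.card) * ((∏ v ∈ S, X v) * X i))]
        rw [Finset.filter_filter, Finset.filter_filter]
        rw [← add_assoc]
        congr 1
        congr 1
        · rw [filter_mem_univ_eq]
          refine Finset.sum_congr rfl fun i hi => ?_
          rw [← Finset.mul_prod_erase S _ hi]
          ring
        · refine Finset.sum_congr rfl fun i hi => ?_
          have hni : i ∉ S := ((Finset.mem_filter.mp hi).2).1
          rw [Finset.prod_insert hni]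
          ring
    _ = _ := by
        simp only [Finset.sum_add_distrib]
end Main

section Main2
variable {n : ℕ} (G : SimpleGraph (Fin n)) [DecidableRel G.Adj]

lemma hT2_lemma (r : ℕ) :
    ∑ S ∈ Stb G, ∑ i ∈ Finset.univ.filter (fun i => i ∉ S ∧ insert i S ∈ Stb G),
        C (cc (bet G r) S.card) * (∏ v ∈ insert i S, X v)
    = ∑ S ∈ Stb G, ∑ i ∈ S, C (cc (bet G r) (S.card - 1)) * (∏ v ∈ S, X v) := by
  classical
  rw [prodfilter G (fun p => p.2 ∉ p.1 ∧ insert p.2 p.1 ∈ Stb G)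
      (fun S i => C (cc (bet G r) S.card) * (∏ v ∈ insert i S, X v))]
  have hright : ∑ S ∈ Stb G, ∑ i ∈ S, C (cc (bet G r) (S.card - 1)) * (∏ v ∈ S, X v)
      = ∑ p ∈ ((Stb G) ×ˢ (Finset.univ : Finset (Fin n))).filter (fun p => p.2 ∈ p.1),
          C (cc (bet G r) (p.1.card - 1)) * (∏ v ∈ p.1, X v) := by
    rw [← prodfilter G (fun p => p.2 ∈ p.1)
        (fun S _ => C (cc (bet G r) (S.card - 1)) * (∏ v ∈ S, X v))]
    exact Finset.sum_congr rfl fun S _ => by rw [filter_mem_univ_eq]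
  rw [hright]
  refine Finset.sum_nbij' (i := fun p => (insert p.2 p.1, p.2))
    (j := fun p => (p.1.erase p.2, p.2)) ?_ ?_ ?_ ?_ ?_
  · intro p hp
    obtain ⟨hprod, hcond⟩ := Finset.mem_filter.mp hp
    exact Finset.mem_filter.mpr ⟨Finset.mem_product.mpr ⟨hcond.2, Finset.mem_univ _⟩,
      Finset.mem_insert_self _ _⟩
  · intro p hp
    obtain ⟨hprod, hcond⟩ := Finset.mem_filter.mp hp
    have hp1 : p.1 ∈ Stb G := (Finset.mem_product.mp hprod).1
    refine Finset.mem_filter.mpr ⟨Finset.mem_product.mpr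
      ⟨Stb_mono G (Finset.erase_subset _ _) hp1, Finset.mem_univ _⟩,
      Finset.notMem_erase _ _, ?_⟩
    rw [Finset.insert_erase hcond]
    exact hp1
  · intro p hp
    obtain ⟨hprod, hcond⟩ := Finset.mem_filter.mp hp
    have := Finset.erase_insert hcond.1
    ext <;> simp [this]
  · intro p hp
    obtain ⟨hprod, hcond⟩ := Finset.mem_filter.mp hp
    have := Finset.insert_erase hcond
    ext <;> simp [this]
  · intro p hp
    obtain ⟨hprod, hcond⟩ := Finset.mem_filter.mp hp
    have hcard : (insert p.2 p.1).card = p.1.card + 1 :=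
      Finset.card_insert_of_notMem hcond.1
    rw [hcard, Nat.add_sub_cancel]

lemma hCb_lemma (r : ℕ) : certA G r * C (bet G r)
    = ∑ S ∈ Stb G, C (cc (bet G r) S.card * bet G r) * (∏ v ∈ S, X v) := by
  rw [certA, Finset.sum_mul]
  refine Finset.sum_congr rfl fun S _ => ?_
  rw [C_mul]
  ring

lemma hmain_lemma (r : ℕ) (hr : 1 ≤ r) :
    (∑ S ∈ Stb G, ∑ i ∈ S, C (cc (bet G r) S.card) * (∏ v ∈ S, X v))
    + (∑ S ∈ Stb G, ∑ i ∈ S, C (cc (bet G r) (S.card - 1)) * (∏ v ∈ S, X v))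
    - (∑ S ∈ Stb G, C (cc (bet G r) S.card * bet G r) * (∏ v ∈ S, X v)) = 1 := by
  classical
  rw [← Finset.sum_add_distrib, ← Finset.sum_sub_distrib]
  rw [Finset.sum_eq_single_of_mem ∅ (empty_mem_Stb G) ?_]
  · have hz : cc (bet G r) 0 * bet G r = -1 := by
      have h := cc_zero (bet G r) (bet_ne_zero G r hr)
      linear_combination -h
    rw [Finset.sum_empty, Finset.sum_empty, Finset.prod_empty, Finset.card_empty, hz]
    simp
  · intro S hS hSne
    have hk1 : 1 ≤ S.card := Finset.card_pos.mpr (Finset.nonempty_iff_ne_empty.mpr hSne)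
    have hkle : S.card ≤ stabilityNumber G := card_le_stab G hS
    have hrec := cc_rec (bet G r) S.card hk1 (bet_ne G r hr hkle)
    have hrec' : (C ((S.card : ℂ)) - C (bet G r)) * C (cc (bet G r) S.card)
        + C ((S.card : ℂ)) * C (cc (bet G r) (S.card - 1)) = (0 : MvPolynomial (Fin n) ℂ) := by
      rw [← C_sub, ← C_mul, ← C_mul, ← C_add, hrec, C_0]
    rw [Finset.sum_const, Finset.sum_const, nsmul_eq_mul, nsmul_eq_mul,
      ← map_natCast (C : ℂ →+* MvPolynomial (Fin n) ℂ) S.card, C_mul]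
    linear_combination (∏ v ∈ S, (X v : MvPolynomial (Fin n) ℂ)) * hrec'

lemma main_identity (r : ℕ) (hr : 1 ≤ r) :
    IsStableCert G r (certA G r) (certQ G r) (certQe G r) := by
  classical
  rw [IsStableCert]
  rw [show ((stabilityNumber G + r : ℕ) : ℂ) = bet G r from rfl]
  rw [mul_sub, hAL_lemma G r, hCb_lemma G r, hQ_lemma G r, hQe_lemma G r, hT2_lemma G r]
  have hT3 : ∑ S ∈ Stb G, ∑ i ∈ Finset.univ.filter (fun i => i ∉ S ∧ insert i S ∉ Stb G),
      C (cc (bet G r) S.card) * ((∏ v ∈ S, X v) * X i)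
      = ∑ p ∈ badPairs G, C (cc (bet G r) p.1.card) * ((∏ v ∈ p.1, X v) * X p.2) := by
    rw [prodfilter G (fun p => p.2 ∉ p.1 ∧ insert p.2 p.1 ∉ Stb G)
        (fun S i => C (cc (bet G r) S.card) * ((∏ v ∈ S, X v) * X i))]
    rfl
  rw [hT3]
  linear_combination -hmain_lemma G r hr
end Main2

section Deg
variable {n : ℕ} (G : SimpleGraph (Fin n)) [DecidableRel G.Adj]

lemma certA_totalDegree (r : ℕ) (hr : 1 ≤ r) :
    (certA G r).totalDegree = stabilityNumber G := by
  classical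
  have hform : certA G r = ∑ S ∈ Stb G, monomial (expOf S) (cc (bet G r) S.card) := by
    rw [certA]
    refine Finset.sum_congr rfl fun S _ => ?_
    rw [prod_X_eq, C_mul_monomial, mul_one]
  apply le_antisymm
  · rw [hform]
    refine le_trans (totalDegree_finset_sum _ _) ?_
    refine Finset.sup_le fun S hS => ?_
    refine le_trans (totalDegree_monomial_le _ _) ?_
    exact le_trans (le_of_eq (expOf_sum S)) (card_le_stab G hS)
  · obtain ⟨M, hM, hMcard⟩ := exists_max_stable G
    have hcoeff : coeff (expOf M) (certA G r) = cc (bet G r) M.card := by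
      rw [hform, coeff_sum]
      rw [Finset.sum_eq_single_of_mem M hM (fun S _ hne => by
        rw [coeff_monomial, if_neg (fun h => hne (expOf_injective h))])]
      rw [coeff_monomial, if_pos rfl]
    have hne : cc (bet G r) M.card ≠ 0 :=
      cc_ne _ _ (fun j hj => bet_ne G r hr (by omega))
    have hmem : expOf M ∈ (certA G r).support := by
      rw [MvPolynomial.mem_support_iff, hcoeff]; exact hne
    have h := le_totalDegree hmem
    rw [expOf_sum] at h
    omega

lemma certQ_totalDegree (r : ℕ) (i : Fin n) :
    (certQ G r i).totalDegree ≤ stabilityNumber G := by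
  classical
  rw [certQ, totalDegree_neg]
  refine le_trans (totalDegree_finset_sum _ _) ?_
  refine Finset.sup_le fun S hS => ?_
  have hS' : S ∈ Stb G := (Finset.mem_filter.mp hS).1
  rw [prod_X_eq, C_mul_monomial, mul_one]
  refine le_trans (totalDegree_monomial_le _ _) ?_
  refine le_trans (le_of_eq (expOf_sum _)) ?_
  exact le_trans (Finset.card_le_card (Finset.erase_subset _ _)) (card_le_stab G hS')

lemma certQe_totalDegree (r : ℕ) (q : Fin n × Fin n) :
    (certQe G r q).totalDegree ≤ stabilityNumber G := by
  classical
  rw [certQe, totalDegree_neg]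
  refine le_trans (totalDegree_finset_sum _ _) ?_
  refine Finset.sup_le fun p hp => ?_
  have hp1 : p.1 ∈ Stb G :=
    (Finset.mem_product.mp (Finset.mem_filter.mp (Finset.mem_filter.mp hp).1).1).1
  rw [prod_X_eq, C_mul_monomial, mul_one]
  refine le_trans (totalDegree_monomial_le _ _) ?_
  refine le_trans (le_of_eq (expOf_sum _)) ?_
  exact le_trans (Finset.card_le_card (Finset.erase_subset _ _)) (card_le_stab G hp1)

end Deg


/-- The minimum degree over all Nullstellensatz certificates for the
non-existence of a stable set of size `α(G) + r` (with `r ≥ 1`) equals exactly `α(G)`: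
a certificate of degree `α(G)` exists, and every certificate has degree at least `α(G)`. -/
theorem minimum_stable_certificate_degree (n : ℕ) (G : SimpleGraph (Fin n))
    [DecidableRel G.Adj] (r : ℕ) (hr : 1 ≤ r) :
    (∃ (A : MvPolynomial (Fin n) ℂ) (Q : Fin n → MvPolynomial (Fin n) ℂ)
        (Qe : Fin n × Fin n → MvPolynomial (Fin n) ℂ),
        IsStableCert G r A Q Qe ∧ stableCertDeg G A Q Qe = stabilityNumber G) ∧
    (∀ (A : MvPolynomial (Fin n) ℂ) (Q : Fin n → MvPolynomial (Fin n) ℂ)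
        (Qe : Fin n × Fin n → MvPolynomial (Fin n) ℂ),
        IsStableCert G r A Q Qe → stabilityNumber G ≤ stableCertDeg G A Q Qe) := by
  constructor
  · refine ⟨certA G r, certQ G r, certQe G r, main_identity G r hr, ?_⟩
    rw [stableCertDeg, certA_totalDegree G r hr]
    refine max_eq_left (max_le ?_ ?_)
    · exact Finset.sup_le fun i _ => certQ_totalDegree G r i
    · exact Finset.sup_le fun p _ => certQe_totalDegree G r p
  · intro A Q Qe hc
    exact le_trans (lower_bound G hr hc) (le_max_left _ _)
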